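/- arXiv:2307.16652 — 3 statements merged into one kernel-verified Lean document; each statement's English description precedes it below -/
import Mathlib

section
/- Let x, y, z be three distinct points of S whose three pairwise distances d(x,y), d(x,z), d(y,z) are pairwise distinct. Then exactly two of the six values g_{xyz}, g_{xzy}, g_{yxz}, g_{yzx}, g_{zxy}, g_{zyx} are nonzero. -/
/-- If `x, y, z` are three distinct points whose three pairwise distances
are pairwise distinct, then exactly two of the six values
`g_{xyz}, g_{xzy}, g_{yxz}, g_{yzx}, g_{zxy}, g_{zyx}` are nonzero. -/
theorem pald_g_exactly_two_nonzero {S : Type*} [Fintype S] [DecidableEq S]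
    (d : S → S → ℝ)
    (hsymm : ∀ a b, d a b = d b a)
    (hzero : ∀ a, d a a = 0)
    (hpos : ∀ a b, a ≠ b → 0 < d a b)
    (U : S → S → Finset S)
    (hU : ∀ a b, U a b = Finset.univ.filter (fun w => d a w ≤ d a b ∨ d b w ≤ d a b))
    (g : S → S → S → ℝ)
    (hg : ∀ a b c, g a b c = (if d a c ≤ d b c then (1 : ℝ) else 0)
      * (if d a c ≤ d a b then (1 : ℝ) else 0) / ((U a b).card : ℝ))
    (x y z : S) (hxy : x ≠ y) (hxz : x ≠ z) (hyz : y ≠ z)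
    (hd1 : d x y ≠ d x z) (hd2 : d x y ≠ d y z) (hd3 : d x z ≠ d y z) :
    ([g x y z, g x z y, g y x z, g y z x, g z x y, g z y x].filter
      (fun v => decide (v ≠ 0))).length = 2 := by
  have hUcard : ∀ a b : S, a ≠ b → ((U a b).card : ℝ) ≠ 0 := by
    intro a b hab
    have ha : a ∈ U a b := by
      rw [hU]
      simp only [Finset.mem_filter, Finset.mem_univ, true_and]
      left; rw [hzero]; exact (hpos a b hab).le
    have h := Finset.card_pos.mpr ⟨a, ha⟩
    exact_mod_cast h.ne'
  have hz : ∀ a b c : S, (d b c < d a c ∨ d a b < d a c) → g a b c = 0 := by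
    intro a b c h
    rw [hg]
    rcases h with h | h <;> simp [h.not_ge]
  have hn : ∀ a b c : S, a ≠ b → d a c ≤ d b c → d a c ≤ d a b → g a b c ≠ 0 := by
    intro a b c hab h1 h2
    rw [hg, if_pos h1, if_pos h2]
    simpa using hUcard a b hab
  have caseA : d x y < d x z → d x y < d y z →
      ([g x y z, g x z y, g y x z, g y z x, g z x y, g z y x].filter
        (fun v => decide (v ≠ 0))).length = 2 := by
    intro hAB hAC
    have z1 : g x y z = 0 := hz x y z (Or.inr hAB)
    have n2 : g x z y ≠ 0 := hn x z y hxz (by rw [hsymm z y]; exact hAC.le) hAB.le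
    have z3 : g y x z = 0 := hz y x z (Or.inr (by rw [hsymm y x]; exact hAC))
    have n4 : g y z x ≠ 0 := hn y z x hyz
      (by rw [hsymm y x, hsymm z x]; exact hAB.le) (by rw [hsymm y x]; exact hAC.le)
    have z5 : g z x y = 0 := hz z x y (Or.inl (by rw [hsymm z y]; exact hAC))
    have z6 : g z y x = 0 := hz z y x (Or.inl (by rw [hsymm y x, hsymm z x]; exact hAB))
    simp [List.filter, z1, n2, z3, n4, z5, z6]
  have caseB : d x z < d x y → d x z < d y z →
      ([g x y z, g x z y, g y x z, g y z x, g z x y, g z y x].filter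
        (fun v => decide (v ≠ 0))).length = 2 := by
    intro hBA hBC
    have n1 : g x y z ≠ 0 := hn x y z hxy hBC.le hBA.le
    have z2 : g x z y = 0 := hz x z y (Or.inr hBA)
    have z3 : g y x z = 0 := hz y x z (Or.inl hBC)
    have z4 : g y z x = 0 := hz y z x (Or.inl (by rw [hsymm z x, hsymm y x]; exact hBA))
    have z5 : g z x y = 0 := hz z x y (Or.inr (by rw [hsymm z x, hsymm z y]; exact hBC))
    have n6 : g z y x ≠ 0 := hn z y x hyz.symm
      (by rw [hsymm z x, hsymm y x]; exact hBA.le) (by rw [hsymm z x, hsymm z y]; exact hBC.le)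
    simp [List.filter, n1, z2, z3, z4, z5, n6]
  have caseC : d y z < d x y → d y z < d x z →
      ([g x y z, g x z y, g y x z, g y z x, g z x y, g z y x].filter
        (fun v => decide (v ≠ 0))).length = 2 := by
    intro hCA hCB
    have z1 : g x y z = 0 := hz x y z (Or.inl hCB)
    have z2 : g x z y = 0 := hz x z y (Or.inl (by rw [hsymm z y]; exact hCA))
    have n3 : g y x z ≠ 0 := hn y x z hxy.symm hCB.le (by rw [hsymm y x]; exact hCA.le)
    have z4 : g y z x = 0 := hz y z x (Or.inr (by rw [hsymm y x]; exact hCA))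
    have n5 : g z x y ≠ 0 := hn z x y hxz.symm
      (by rw [hsymm z y]; exact hCA.le) (by rw [hsymm z y, hsymm z x]; exact hCB.le)
    have z6 : g z y x = 0 := hz z y x (Or.inr (by rw [hsymm z y, hsymm z x]; exact hCB))
    simp [List.filter, z1, z2, n3, z4, n5, z6]
  rcases hd1.lt_or_gt with hAB | hBA <;> rcases hd2.lt_or_gt with hAC | hCA <;>
    rcases hd3.lt_or_gt with hBC | hCB
  · exact caseA hAB hAC
  · exact caseA hAB hAC
  · linarith
  · exact caseC hCA hCB
  · exact caseB hBA hBC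
  · linarith
  · exact caseB hBA hBC
  · exact caseC hCA hCB
end

section
/- Suppose the distances on S are tie-free. Then the number of ordered triplets (x,y,z) of pairwise distinct points of S with g_{xyz} ≠ 0 equals 2·C(n,3) = n(n−1)(n−2)/3; that is, exactly one third of the n(n−1)(n−2) ordered triplets of distinct points yield a nonzero value of g. -/
lemma vec3_injective {α : Type*} {x y z : α} (h1 : x ≠ y) (h2 : x ≠ z) (h3 : y ≠ z) :
    Function.Injective ![x, y, z] := by
  intro i j hij
  fin_cases i <;> fin_cases j <;> simp_all

lemma card_distinct_triples (α : Type*) [Fintype α] [DecidableEq α] :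
    (Finset.univ.filter (fun t : α × α × α =>
      t.1 ≠ t.2.1 ∧ t.1 ≠ t.2.2 ∧ t.2.1 ≠ t.2.2)).card = Fintype.card (Fin 3 ↪ α) := by
  rw [← Finset.card_univ]
  refine Finset.card_bij'
    (fun t ht => ⟨![t.1, t.2.1, t.2.2], by
      simp only [Finset.mem_filter, Finset.mem_univ, true_and] at ht
      exact vec3_injective ht.1 ht.2.1 ht.2.2⟩)
    (fun f _ => (f 0, f 1, f 2)) ?_ ?_ ?_ ?_
  · intro t ht; exact Finset.mem_univ _
  · intro f _
    simp only [Finset.mem_filter, Finset.mem_univ, true_and]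
    refine ⟨?_, ?_, ?_⟩ <;> exact f.injective.ne (by decide)
  · rintro ⟨x, y, z⟩ _
    simp
  · intro f _
    ext i
    fin_cases i <;> simp

/-- If the distances on `S` are tie-free, then the number of ordered
triplets `(x,y,z)` of pairwise distinct points with `g_{xyz} ≠ 0` equals
`2·C(n,3) = n(n-1)(n-2)/3`. -/
theorem pald_g_nonzero_count {S : Type*} [Fintype S] [DecidableEq S]
    (d : S → S → ℝ)
    (hsymm : ∀ a b, d a b = d b a)
    (hzero : ∀ a, d a a = 0)
    (hpos : ∀ a b, a ≠ b → 0 < d a b)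
    (htiefree : ∀ a b a' b', a ≠ b → a' ≠ b' → d a b = d a' b' →
      (a = a' ∧ b = b') ∨ (a = b' ∧ b = a'))
    (n : ℕ) (hcard : Fintype.card S = n)
    (U : S → S → Finset S)
    (hU : ∀ a b, U a b = Finset.univ.filter (fun w => d a w ≤ d a b ∨ d b w ≤ d a b))
    (g : S → S → S → ℝ)
    (hg : ∀ a b c, g a b c = (if d a c ≤ d b c then (1 : ℝ) else 0)
      * (if d a c ≤ d a b then (1 : ℝ) else 0) / ((U a b).card : ℝ)) :
    (Finset.univ.filter (fun t : S × S × S =>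
        t.1 ≠ t.2.1 ∧ t.1 ≠ t.2.2 ∧ t.2.1 ≠ t.2.2 ∧ g t.1 t.2.1 t.2.2 ≠ 0)).card
      = 2 * n.choose 3 ∧
    2 * n.choose 3 = n * (n - 1) * (n - 2) / 3 := by
  classical
  have hnn : ∀ a b : S, 0 ≤ d a b := by
    intro a b
    rcases eq_or_ne a b with h | h
    · simp [h, hzero]
    · exact (hpos a b h).le
  have hUpos : ∀ a b : S, (0 : ℝ) < ((U a b).card : ℝ) := by
    intro a b
    have ha : a ∈ U a b := by
      rw [hU]
      simp [hzero a, hnn a b]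
    exact_mod_cast Finset.card_pos.2 ⟨a, ha⟩
  have hgiff : ∀ a b c : S, g a b c ≠ 0 ↔ (d a c ≤ d b c ∧ d a c ≤ d a b) := by
    intro a b c
    rw [hg]
    have hc := (hUpos a b).ne'
    split_ifs with h1 h2 <;> simp_all
  have hd1 : ∀ x y z : S, x ≠ y → x ≠ z → y ≠ z → d x z ≠ d y z := by
    intro x y z hxy hxz hyz heq
    rcases htiefree x z y z hxz hyz heq with ⟨h1, _⟩ | ⟨h1, _⟩
    · exact hxy h1
    · exact hxz h1
  have hd2 : ∀ x y z : S, x ≠ y → x ≠ z → y ≠ z → d x z ≠ d x y := by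
    intro x y z hxy hxz hyz heq
    rcases htiefree x z x y hxz hxy heq with ⟨_, h2⟩ | ⟨h1, _⟩
    · exact hyz h2.symm
    · exact hxy h1
  set A : Finset (S × S × S) := Finset.univ.filter (fun t : S × S × S =>
      t.1 ≠ t.2.1 ∧ t.1 ≠ t.2.2 ∧ t.2.1 ≠ t.2.2 ∧
      d t.1 t.2.2 ≤ d t.2.1 t.2.2 ∧ d t.1 t.2.2 ≤ d t.1 t.2.1) with hA
  set B : Finset (S × S × S) := Finset.univ.filter (fun t : S × S × S =>
      t.1 ≠ t.2.1 ∧ t.1 ≠ t.2.2 ∧ t.2.1 ≠ t.2.2 ∧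
      d t.1 t.2.1 ≤ d t.2.1 t.2.2 ∧ d t.1 t.2.1 ≤ d t.1 t.2.2) with hB
  set C : Finset (S × S × S) := Finset.univ.filter (fun t : S × S × S =>
      t.1 ≠ t.2.1 ∧ t.1 ≠ t.2.2 ∧ t.2.1 ≠ t.2.2 ∧
      d t.2.1 t.2.2 ≤ d t.1 t.2.2 ∧ d t.2.1 t.2.2 ≤ d t.1 t.2.1) with hC
  set T : Finset (S × S × S) := Finset.univ.filter (fun t : S × S × S =>
      t.1 ≠ t.2.1 ∧ t.1 ≠ t.2.2 ∧ t.2.1 ≠ t.2.2) with hT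
  have hmemA : ∀ t : S × S × S, t ∈ A ↔
      (t.1 ≠ t.2.1 ∧ t.1 ≠ t.2.2 ∧ t.2.1 ≠ t.2.2 ∧
       d t.1 t.2.2 ≤ d t.2.1 t.2.2 ∧ d t.1 t.2.2 ≤ d t.1 t.2.1) := by
    intro t; rw [hA, Finset.mem_filter]; simp
  have hmemB : ∀ t : S × S × S, t ∈ B ↔
      (t.1 ≠ t.2.1 ∧ t.1 ≠ t.2.2 ∧ t.2.1 ≠ t.2.2 ∧
       d t.1 t.2.1 ≤ d t.2.1 t.2.2 ∧ d t.1 t.2.1 ≤ d t.1 t.2.2) := by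
    intro t; rw [hB, Finset.mem_filter]; simp
  have hmemC : ∀ t : S × S × S, t ∈ C ↔
      (t.1 ≠ t.2.1 ∧ t.1 ≠ t.2.2 ∧ t.2.1 ≠ t.2.2 ∧
       d t.2.1 t.2.2 ≤ d t.1 t.2.2 ∧ d t.2.1 t.2.2 ≤ d t.1 t.2.1) := by
    intro t; rw [hC, Finset.mem_filter]; simp
  have hmemT : ∀ t : S × S × S, t ∈ T ↔
      (t.1 ≠ t.2.1 ∧ t.1 ≠ t.2.2 ∧ t.2.1 ≠ t.2.2) := by
    intro t; rw [hT, Finset.mem_filter]; simp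
  -- goal set equals A
  have hgoalA : (Finset.univ.filter (fun t : S × S × S =>
        t.1 ≠ t.2.1 ∧ t.1 ≠ t.2.2 ∧ t.2.1 ≠ t.2.2 ∧ g t.1 t.2.1 t.2.2 ≠ 0)) = A := by
    rw [hA]
    apply Finset.filter_congr
    intro t _
    constructor
    · rintro ⟨h1, h2, h3, h4⟩
      exact ⟨h1, h2, h3, (hgiff _ _ _).1 h4⟩
    · rintro ⟨h1, h2, h3, h4, h5⟩
      exact ⟨h1, h2, h3, (hgiff _ _ _).2 ⟨h4, h5⟩⟩
  -- card A = card C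
  have hAC : A.card = C.card := by
    refine Finset.card_bij' (fun t _ => (t.2.1, t.2.2, t.1)) (fun t _ => (t.2.2, t.1, t.2.1))
      ?_ ?_ ?_ ?_
    · rintro ⟨x, y, z⟩ ht
      obtain ⟨h1, h2, h3, h4, h5⟩ := (hmemA _).1 ht
      refine (hmemC _).2 ⟨h3, Ne.symm h1, Ne.symm h2, ?_, ?_⟩
      · show d z x ≤ d y x
        rw [hsymm z x, hsymm y x]; exact h5
      · show d z x ≤ d y z
        rw [hsymm z x]; exact h4
    · rintro ⟨x, y, z⟩ ht
      obtain ⟨h1, h2, h3, h4, h5⟩ := (hmemC _).1 ht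
      refine (hmemA _).2 ⟨Ne.symm h2, Ne.symm h3, h1, ?_, ?_⟩
      · show d z y ≤ d x y
        rw [hsymm z y]; exact h5
      · show d z y ≤ d z x
        rw [hsymm z y, hsymm z x]; exact h4
    · rintro ⟨x, y, z⟩ _; rfl
    · rintro ⟨x, y, z⟩ _; rfl
  -- card C = card B
  have hCB : C.card = B.card := by
    refine Finset.card_bij' (fun t _ => (t.2.1, t.2.2, t.1)) (fun t _ => (t.2.2, t.1, t.2.1))
      ?_ ?_ ?_ ?_
    · rintro ⟨x, y, z⟩ ht
      obtain ⟨h1, h2, h3, h4, h5⟩ := (hmemC _).1 ht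
      refine (hmemB _).2 ⟨h3, Ne.symm h1, Ne.symm h2, ?_, ?_⟩
      · show d y z ≤ d z x
        rw [hsymm z x]; exact h4
      · show d y z ≤ d y x
        rw [hsymm y x]; exact h5
    · rintro ⟨x, y, z⟩ ht
      obtain ⟨h1, h2, h3, h4, h5⟩ := (hmemB _).1 ht
      refine (hmemC _).2 ⟨Ne.symm h2, Ne.symm h3, h1, ?_, ?_⟩
      · show d x y ≤ d z y
        rw [hsymm z y]; exact h4
      · show d x y ≤ d z x
        rw [hsymm z x]; exact h5
    · rintro ⟨x, y, z⟩ _; rfl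
    · rintro ⟨x, y, z⟩ _; rfl
  -- disjointness
  have hdAB : Disjoint A B := by
    rw [Finset.disjoint_left]
    rintro ⟨x, y, z⟩ ha hb
    obtain ⟨h1, h2, h3, h4, h5⟩ := (hmemA _).1 ha
    obtain ⟨_, _, _, h6, h7⟩ := (hmemB _).1 hb
    exact hd2 x y z h1 h2 h3 (le_antisymm h5 h7)
  have hdAC : Disjoint A C := by
    rw [Finset.disjoint_left]
    rintro ⟨x, y, z⟩ ha hc
    obtain ⟨h1, h2, h3, h4, h5⟩ := (hmemA _).1 ha
    obtain ⟨_, _, _, h6, h7⟩ := (hmemC _).1 hc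
    exact hd1 x y z h1 h2 h3 (le_antisymm h4 h6)
  have hdBC : Disjoint B C := by
    rw [Finset.disjoint_left]
    rintro ⟨x, y, z⟩ hb hc
    obtain ⟨h1, h2, h3, h4, h5⟩ := (hmemB _).1 hb
    obtain ⟨_, _, _, h6, h7⟩ := (hmemC _).1 hc
    have : d y z ≠ d y x := hd2 y x z (Ne.symm h1) h3 h2
    rw [hsymm y x] at this
    exact this (le_antisymm h7 h4)
  -- union
  have hunion : A ∪ B ∪ C = T := by
    ext ⟨x, y, z⟩
    simp only [Finset.mem_union, hmemA, hmemB, hmemC, hmemT]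
    constructor
    · rintro ((⟨h1, h2, h3, _⟩ | ⟨h1, h2, h3, _⟩) | ⟨h1, h2, h3, _⟩) <;> exact ⟨h1, h2, h3⟩
    · rintro ⟨h1, h2, h3⟩
      rcases le_total (d x z) (d x y) with ha | ha
      · rcases le_total (d x z) (d y z) with hb | hb
        · exact Or.inl (Or.inl ⟨h1, h2, h3, hb, ha⟩)
        · exact Or.inr ⟨h1, h2, h3, hb, le_trans hb ha⟩
      · rcases le_total (d x y) (d y z) with hb | hb
        · exact Or.inl (Or.inr ⟨h1, h2, h3, hb, ha⟩)
        · exact Or.inr ⟨h1, h2, h3, le_trans hb ha, hb⟩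
  have hcardT : T.card = 3 * A.card := by
    rw [← hunion, Finset.card_union_of_disjoint, Finset.card_union_of_disjoint hdAB]
    · rw [hAC, hCB] at *
      omega
    · rw [Finset.disjoint_union_left]
      exact ⟨hdAC, hdBC⟩
  -- card T via embeddings
  have hTemb : T.card = Fintype.card (Fin 3 ↪ S) := by
    rw [hT]; exact card_distinct_triples S
  have hemb : Fintype.card (Fin 3 ↪ S) = n.descFactorial 3 := by
    rw [Fintype.card_embedding_eq, Fintype.card_fin, hcard]
  have hdesc : n.descFactorial 3 = n * (n - 1) * (n - 2) := by
    simp [Nat.descFactorial]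
    ring
  have hchoose : n.descFactorial 3 = 6 * n.choose 3 := by
    rw [Nat.descFactorial_eq_factorial_mul_choose]
    norm_num [Nat.factorial]
  have hAcard : A.card = 2 * n.choose 3 := by
    have h1 : 3 * A.card = 6 * n.choose 3 := by
      rw [← hcardT, hTemb, hemb, hchoose]
    omega
  refine ⟨by rw [hgoalA, hAcard], ?_⟩
  have h6 : n * (n - 1) * (n - 2) = 6 * n.choose 3 := by rw [← hdesc, hchoose]
  omega
end

section
/- Suppose the distances on S are tie-free. Then for every pair of distinct points x, z of S, Σ_{y ∈ S} g_{xyz} = Σ_{y ∈ S \ {x,z}} 1[d(x,z) < d(x,y) and d(x,z) < d(y,z)] / u_{xy}; that is, the cohesion sum over all y equals the sum over third points y of 1/u_{xy} restricted to triplets {x,y,z} in which (x,z) is the strictly closest pair. (This establishes the equivalence of the pairwise and triplet algorithms' cohesion updates.) -/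
/-- If the distances on `S` are tie-free, then for every pair of distinct
points `x, z`, `Σ_{y ∈ S} g_{xyz} = Σ_{y ∈ S \ {x,z}} 1[d(x,z) < d(x,y) ∧ d(x,z) < d(y,z)] / u_{xy}`,
i.e. the pairwise and triplet cohesion updates agree. -/
theorem pald_pairwise_triplet_equiv {S : Type*} [Fintype S] [DecidableEq S]
    (d : S → S → ℝ)
    (hsymm : ∀ a b, d a b = d b a)
    (hzero : ∀ a, d a a = 0)
    (hpos : ∀ a b, a ≠ b → 0 < d a b)
    (htiefree : ∀ a b a' b', a ≠ b → a' ≠ b' → d a b = d a' b' →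
      (a = a' ∧ b = b') ∨ (a = b' ∧ b = a'))
    (U : S → S → Finset S)
    (hU : ∀ a b, U a b = Finset.univ.filter (fun w => d a w ≤ d a b ∨ d b w ≤ d a b))
    (g : S → S → S → ℝ)
    (hg : ∀ a b c, g a b c = (if d a c ≤ d b c then (1 : ℝ) else 0)
      * (if d a c ≤ d a b then (1 : ℝ) else 0) / ((U a b).card : ℝ))
    (x z : S) (hxz : x ≠ z) :
    ∑ y : S, g x y z
      = ∑ y ∈ Finset.univ.filter (fun y : S => y ≠ x ∧ y ≠ z),
          (if d x z < d x y ∧ d x z < d y z then (1 : ℝ) else 0) / ((U x y).card : ℝ) := by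
  rw [Finset.sum_filter]
  apply Finset.sum_congr rfl
  intro y _
  by_cases hyx : y = x
  · subst hyx
    have h : ¬ d y z ≤ d y y := by rw [hzero]; exact not_le.mpr (hpos y z hxz)
    simp [hg, h]
  by_cases hyz : y = z
  · subst hyz
    have h : ¬ d x y ≤ d y y := by rw [hzero]; exact not_le.mpr (hpos x y hxz)
    simp [hg, h]
  · have hne1 : d x z ≠ d y z := fun h => by
      rcases htiefree x z y z hxz hyz h with ⟨h1, _⟩ | ⟨h1, _⟩
      · exact hyx h1.symm
      · exact hxz h1
    have hne2 : d x z ≠ d x y := fun h => by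
      rcases htiefree x z x y hxz (fun h' => hyx h'.symm) h with ⟨_, h2⟩ | ⟨h1, _⟩
      · exact hyz h2.symm
      · exact hyx h1.symm
    have e1 : (d x z ≤ d y z) ↔ (d x z < d y z) := ⟨fun h => lt_of_le_of_ne h hne1, le_of_lt⟩
    have e2 : (d x z ≤ d x y) ↔ (d x z < d x y) := ⟨fun h => lt_of_le_of_ne h hne2, le_of_lt⟩
    rw [hg, if_pos (show (y ≠ x ∧ y ≠ z) from ⟨hyx, hyz⟩)]
    by_cases h1 : d x z < d y z <;> by_cases h2 : d x z < d x y <;> simp [e1, e2, h1, h2]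
end
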